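/- Under the Hurwitz action of B_n on (F_m)^n, the orbit of a tuple t = (t_1, …, t_n) with each t_i a free generator x_j is exactly the set of tuples lying in ⋃_{τ∈S_n} C(t_{τ(1)}) × ⋯ × C(t_{τ(n)}) whose product equals t_1 ⋯ t_n, where C(x) denotes the conjugacy class of x in F_m. -/

import Mathlib

set_option linter.unusedSectionVars false
namespace HurwitzAux

open FreeGroup List

variable {α : Type*} [DecidableEq α]

abbrev Wd (α : Type*) := List (α × Bool)

/-- cancellation relation: `a` followed by `b` cancels. -/
def Cl (a b : α × Bool) : Prop := a.1 = b.1 ∧ a.2 = !b.2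

/-- reduced word -/
def Rd (L : Wd α) : Prop := L.Chain' (fun a b => ¬ Cl a b)

lemma rd_nil : Rd ([] : Wd α) := List.isChain_nil

lemma Rd.tail {L : Wd α} (h : Rd L) : Rd L.tail := List.IsChain.tail h

lemma reduce_eq_self {L : Wd α} (h : Rd L) : reduce L = L := by
  induction L with
  | nil => rfl
  | cons a t ih =>
    have ht : Rd t := h.tail
    rw [reduce.cons, ih ht]
    cases t with
    | nil => rfl
    | cons b t2 =>
      have hnc : ¬ Cl a b := (List.isChain_cons_cons.1 h).1
      simp only [Cl] at hnc
      simp only [List.casesOn]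
      rw [if_neg hnc]

lemma rd_reduce (L : Wd α) : Rd (reduce L) := by
  induction L with
  | nil => exact rd_nil
  | cons a t ih =>
    rw [reduce.cons]
    rcases h : reduce t with _ | ⟨b, t2⟩
    · exact List.isChain_singleton a
    · rw [h] at ih
      simp only []
      by_cases hc : a.1 = b.1 ∧ a.2 = !b.2
      · rw [if_pos hc]
        exact ih.tail
      · rw [if_neg hc]
        exact List.isChain_cons_cons.2 ⟨hc, ih⟩

lemma rd_toWord (x : FreeGroup α) : Rd x.toWord := by
  rw [← reduce_toWord]; exact rd_reduce _

lemma toWord_mk_rd {L : Wd α} (h : Rd L) : (mk L).toWord = L := by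
  rw [toWord_mk, reduce_eq_self h]

lemma norm_mk_rd {L : Wd α} (h : Rd L) : FreeGroup.norm (mk L) = L.length := by
  rw [FreeGroup.norm, toWord_mk_rd h]

def ng (a : α × Bool) : α × Bool := (a.1, !a.2)

lemma invRev_eq (L : Wd α) : invRev L = (L.map ng).reverse := rfl

lemma rd_invRev {L : Wd α} (h : Rd L) : Rd (invRev L) := by
  rw [invRev_eq, Rd, List.Chain', List.isChain_reverse, List.isChain_map]
  refine h.imp ?_
  intro a b hab
  simp only [flip, Cl, ng] at *
  rintro ⟨h1, h2⟩
  exact hab ⟨h1.symm, by revert h2; cases a.2 <;> cases b.2 <;> simp⟩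

lemma head?_invRev (L : Wd α) : (invRev L).head? = L.getLast?.map ng := by
  rw [invRev_eq, List.head?_reverse, List.getLast?_map]

lemma getLast?_invRev (L : Wd α) : (invRev L).getLast? = L.head?.map ng := by
  rw [invRev_eq, List.getLast?_reverse, List.head?_map]

lemma rd_suffix {L L' : Wd α} (h : Rd L) (hs : L' <:+ L) : Rd L' := List.IsChain.suffix h hs
lemma rd_prefix {L L' : Wd α} (h : Rd L) (hs : L' <+: L) : Rd L' := List.IsChain.prefix h hs

/-- positive word -/
def Pos (L : Wd α) : Prop := ∀ p ∈ L, p.2 = true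

lemma rd_of_pos {L : Wd α} (h : Pos L) : Rd L := by
  induction L with
  | nil => exact rd_nil
  | cons a t ih =>
    refine List.isChain_cons.2 ⟨?_, ih fun p hp => h p (List.mem_cons_of_mem _ hp)⟩
    intro y hy hc
    have ha := h a (List.mem_cons_self)
    have hb := h y (List.mem_cons_of_mem _ (List.mem_of_mem_head? hy))
    have := hc.2
    rw [ha, hb] at this
    simp at this


/-- canonical conjugator condition: `u`'s reduced word does not end in `x` or `x⁻¹`. -/
def Can (u : FreeGroup α) (x : α) : Prop := ∀ p : Bool, u.toWord.getLast? ≠ some (x, p)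

lemma structWord {u : FreeGroup α} {x : α} (h : Can u x) :
    (u * of x * u⁻¹).toWord = u.toWord ++ (x, true) :: invRev u.toWord := by
  have hmk : u * of x * u⁻¹ = mk (u.toWord ++ (x, true) :: invRev u.toWord) := by
    conv_lhs => rw [← mk_toWord (x := u)]
    rw [inv_mk, of]
    rw [mul_mk, mul_mk]
    simp
  rw [hmk]
  apply toWord_mk_rd
  have h1 : Rd u.toWord := rd_toWord u
  have h2 : Rd (invRev u.toWord) := rd_invRev h1
  refine List.IsChain.append h1 (List.isChain_cons.2 ⟨?_, h2⟩) ?_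
  · intro y hy hc
    rw [head?_invRev] at hy
    rcases Option.map_eq_some_iff.1 (Option.mem_def.1 hy) with ⟨a, ha, rfl⟩
    rcases hc with ⟨hc1, hc2⟩
    simp only [ng] at hc1 hc2
    apply h true
    rw [ha]
    have : a = (x, true) := by
      ext
      · exact hc1.symm
      · revert hc2; cases a.2 <;> simp
    rw [this]
  · intro y hy z hz hc
    simp only [List.head?_cons, Option.mem_def, Option.some.injEq] at hz
    subst hz
    rcases hc with ⟨hc1, hc2⟩
    simp only at hc1 hc2
    apply h false
    rw [Option.mem_def.1 hy]
    have : y = (x, false) := by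
      ext
      · exact hc1
      · rw [hc2]; rfl
    rw [this]

lemma norm_conj_can {u : FreeGroup α} {x : α} (h : Can u x) :
    FreeGroup.norm (u * of x * u⁻¹) = 2 * FreeGroup.norm u + 1 := by
  rw [FreeGroup.norm, structWord h]
  simp [FreeGroup.norm, invRev_length]
  ring

lemma norm_conj_le (w : FreeGroup α) (x : α) :
    FreeGroup.norm (w * of x * w⁻¹) ≤ 2 * FreeGroup.norm w + 1 := by
  calc FreeGroup.norm (w * of x * w⁻¹) ≤ FreeGroup.norm (w * of x) + FreeGroup.norm w⁻¹ :=
        norm_mul_le _ _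
    _ ≤ FreeGroup.norm w + FreeGroup.norm (of x) + FreeGroup.norm w⁻¹ :=
        Nat.add_le_add_right (norm_mul_le _ _) _
    _ = 2 * FreeGroup.norm w + 1 := by rw [norm_of, norm_inv_eq]; ring

/-- existence of canonical conjugator -/
lemma canon (w : FreeGroup α) (x : α) :
    ∃ u : FreeGroup α, u * of x * u⁻¹ = w * of x * w⁻¹ ∧ Can u x := by
  generalize hN : FreeGroup.norm w = N
  induction N using Nat.strong_induction_on generalizing w with
  | _ N ih =>
  by_cases h : Can w x
  · exact ⟨w, rfl, h⟩
  · simp only [Can, not_forall, not_not] at h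
    rcases h with ⟨p, hp⟩
    have hne : w.toWord ≠ [] := by
      intro h0; rw [h0] at hp; simp at hp
    set W := w.toWord with hW
    have hgl : W.getLast hne = (x, p) := by
      have h2 := List.getLast?_eq_getLast (l := W) hne
      rw [hp] at h2
      exact Option.some.inj h2.symm
    have hsplit : W.dropLast ++ [(x, p)] = W := by
      rw [← hgl]; exact List.dropLast_append_getLast hne
    have hrdrop : Rd W.dropLast := rd_prefix (rd_toWord w) ⟨[W.getLast hne], by rw [hgl]; exact hsplit⟩
    set w' := mk W.dropLast with hw'
    have hxp : (mk [(x, p)] : FreeGroup α) * of x * (mk [(x, p)])⁻¹ = of x := by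
      cases p
      · have : (mk [(x, false)] : FreeGroup α) = (of x)⁻¹ := by
          rw [of, inv_mk]; rfl
        rw [this]; group
      · have : (mk [(x, true)] : FreeGroup α) = of x := rfl
        rw [this]; group
    have hweq : w = w' * mk [(x, p)] := by
      rw [hw', mul_mk, hsplit]
      exact (mk_toWord).symm
    have heq : w' * of x * w'⁻¹ = w * of x * w⁻¹ := by
      rw [hweq, mul_inv_rev]
      have e1 : w' * mk [(x,p)] * of x * ((mk [(x,p)])⁻¹ * w'⁻¹)
          = w' * (mk [(x,p)] * of x * (mk [(x,p)])⁻¹) * w'⁻¹ := by group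
      rw [e1, hxp]
    have hlt : FreeGroup.norm w' < N := by
      rw [← hN, hw', norm_mk_rd hrdrop]
      show _ < W.length
      have : W.length = W.dropLast.length + 1 := by
        conv_lhs => rw [← hsplit]
        simp
      omega
    rcases ih _ hlt w' rfl with ⟨u, hu1, hu2⟩
    exact ⟨u, by rw [hu1, heq], hu2⟩


/-- strips the longest common prefix, returns the two tails -/
def splitP : Wd α → Wd α → Wd α × Wd α
  | a :: U, b :: V => if a = b then splitP U V else (a :: U, b :: V)
  | U, V => (U, V)

lemma splitP_spec : ∀ (U V : Wd α), ∃ P : Wd α,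
    U = P ++ (splitP U V).1 ∧ V = P ++ (splitP U V).2 ∧
    ((splitP U V).1 = [] ∨ (splitP U V).2 = [] ∨
      (splitP U V).1.head? ≠ (splitP U V).2.head?) := by
  intro U
  induction U with
  | nil => intro V; exact ⟨[], by simp [splitP], by simp [splitP], Or.inl (by simp [splitP])⟩
  | cons a U ih =>
    intro V
    cases V with
    | nil =>
      refine ⟨[], by simp [splitP], by simp [splitP], Or.inr (Or.inl (by simp [splitP]))⟩
    | cons b V =>
      by_cases hab : a = b
      · subst hab
        rcases ih V with ⟨P, h1, h2, h3⟩
        have hs : splitP (a :: U) (a :: V) = splitP U V := by simp [splitP]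
        refine ⟨a :: P, ?_, ?_, ?_⟩
        · rw [hs]; simpa using h1
        · rw [hs]; simpa using h2
        · rw [hs]; exact h3
      · have hs : splitP (a :: U) (b :: V) = (a :: U, b :: V) := by simp [splitP, hab]
        refine ⟨[], by rw [hs]; rfl, by rw [hs]; rfl, Or.inr (Or.inr ?_)⟩
        rw [hs]
        simpa using hab

lemma prodSplit (u v : FreeGroup α) :
    (u⁻¹ * v).toWord = invRev (splitP u.toWord v.toWord).1 ++ (splitP u.toWord v.toWord).2 := by
  rcases splitP_spec u.toWord v.toWord with ⟨P, h1, h2, h3⟩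
  set U2 := (splitP u.toWord v.toWord).1
  set V2 := (splitP u.toWord v.toWord).2
  have hU2 : Rd U2 := rd_suffix (rd_toWord u) ⟨P, h1.symm⟩
  have hV2 : Rd V2 := rd_suffix (rd_toWord v) ⟨P, h2.symm⟩
  have hmk : u⁻¹ * v = mk (invRev U2 ++ V2) := by
    have hu : u = mk P * mk U2 := by rw [mul_mk, ← h1, mk_toWord]
    have hv : v = mk P * mk V2 := by rw [mul_mk, ← h2, mk_toWord]
    have e : u⁻¹ * v = (mk U2)⁻¹ * mk V2 := by
      rw [hu, hv]; group
    rw [e, inv_mk, mul_mk]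
  rw [hmk]
  apply toWord_mk_rd
  refine List.IsChain.append (rd_invRev hU2) hV2 ?_
  intro yn hyn z hz hc
  rw [getLast?_invRev] at hyn
  rcases Option.map_eq_some_iff.1 (Option.mem_def.1 hyn) with ⟨a, ha, rfl⟩
  rcases hc with ⟨hc1, hc2⟩
  simp only [ng] at hc1 hc2
  have haz : a = z := by
    ext
    · exact hc1
    · revert hc2; cases a.2 <;> cases z.2 <;> simp
  rcases h3 with h3 | h3 | h3
  · rw [h3] at ha; simp at ha
  · rw [h3] at hz; simp at hz
  · apply h3
    rw [Option.mem_def.1 ha, Option.mem_def.1 hz, haz]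


/-- "no decreasing Hurwitz move" word conditions for an adjacent canonical pair -/
def NDW (u : FreeGroup α) (x : α) (u' : FreeGroup α) (x' : α) : Prop :=
  (¬ ∃ V, u'.toWord = u.toWord ++ (x, false) :: V) ∧
  (¬ ∃ V, u.toWord = u'.toWord ++ (x', true) :: V)

lemma step {u₀ u₁ : FreeGroup α} {x₀ x₁ : α} (h₀ : Can u₀ x₀) (h₁ : Can u₁ x₁)
    (hnd : NDW u₀ x₀ u₁ x₁) {Z : FreeGroup α} {R : Wd α}
    (hZ : Z.toWord = u₁.toWord ++ (x₁, true) :: R) :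
    (u₀ * of x₀ * u₀⁻¹ * Z).toWord =
      u₀.toWord ++ (x₀, true) :: ((u₀⁻¹ * u₁).toWord ++ (x₁, true) :: R) := by
  set S := (u₀⁻¹ * u₁).toWord with hSdef
  have hz' : Z = u₁ * mk ((x₁, true) :: R) := by
    conv_lhs => rw [← mk_toWord (x := Z)]
    rw [hZ, ← mul_mk, mk_toWord]
  have key : u₀ * of x₀ * u₀⁻¹ * Z = mk (u₀.toWord ++ (x₀, true) :: (S ++ (x₁, true) :: R)) := by
    rw [hz']
    have e : u₀ * of x₀ * u₀⁻¹ * (u₁ * mk ((x₁, true) :: R)) =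
        u₀ * of x₀ * (u₀⁻¹ * u₁) * mk ((x₁, true) :: R) := by group
    have e2 : u₀ * of x₀ * (u₀⁻¹ * u₁) * mk ((x₁, true) :: R) =
        mk u₀.toWord * mk [(x₀, true)] * mk S * mk ((x₁, true) :: R) := by
      simp only [hSdef, mk_toWord]
      rfl
    rw [e, e2, mul_mk, mul_mk, mul_mk]
    congr 1
    simp
  rw [key]
  apply toWord_mk_rd
  -- gather split data
  rcases splitP_spec u₀.toWord u₁.toWord with ⟨P, hp1, hp2, hp3⟩
  set U2 := (splitP u₀.toWord u₁.toWord).1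
  set V2 := (splitP u₀.toWord u₁.toWord).2
  have hS : S = invRev U2 ++ V2 := prodSplit u₀ u₁
  have hRd1R : Rd ((x₁, true) :: R) := by
    refine rd_suffix (L := Z.toWord) ?_ ⟨u₁.toWord, hZ.symm⟩
    exact rd_toWord Z
  have hRdS : Rd S := rd_toWord _
  -- border between S and (x₁,true)::R
  have hM : Rd (S ++ (x₁, true) :: R) := by
    refine List.IsChain.append hRdS hRd1R ?_
    intro y hy z hz hc
    simp only [List.head?_cons, Option.mem_def, Option.some.injEq] at hz
    subst hz
    rcases hc with ⟨hc1, hc2⟩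
    simp only at hc1 hc2
    rcases eq_or_ne V2 ([] : Wd α) with hV | hV
    · rcases eq_or_ne U2 ([] : Wd α) with hU | hU
      · rw [hS, hU, hV] at hy; simp at hy
      · rw [hS, hV, List.append_nil, getLast?_invRev] at hy
        rcases Option.map_eq_some_iff.1 (Option.mem_def.1 hy) with ⟨a, ha, rfl⟩
        simp only [ng] at hc1 hc2
        have ha2 : a = (x₁, true) := by
          ext
          · exact hc1
          · revert hc2; cases a.2 <;> simp
        apply hnd.2
        rcases U2 with _ | ⟨a0, U2t⟩
        · exact absurd rfl hU
        · simp only [List.head?_cons, Option.some.injEq] at ha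
          refine ⟨U2t, ?_⟩
          rw [hp1, hp2, hV, List.append_nil, ha, ha2]
    · rw [hS, List.getLast?_append_of_ne_nil _ hV] at hy
      have hy' : y ∈ u₁.toWord.getLast? := by
        rw [hp2, List.getLast?_append_of_ne_nil _ hV]; exact hy
      apply h₁ false
      rw [Option.mem_def.1 hy']
      have : y = (x₁, false) := by
        ext
        · exact hc1
        · rw [hc2]; rfl
      rw [this]
  -- border between (x₀,true) and S ++ ...
  have hCx : Rd ((x₀, true) :: (S ++ (x₁, true) :: R)) := by
    refine List.isChain_cons.2 ⟨?_, hM⟩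
    intro z hz hc
    rcases hc with ⟨hc1, hc2⟩
    simp only at hc1 hc2
    rcases eq_or_ne S ([] : Wd α) with hSe | hSe
    · rw [hSe, List.nil_append, List.head?_cons] at hz
      simp only [Option.mem_def, Option.some.injEq] at hz
      subst hz
      simp at hc2
    · rw [List.head?_append_of_ne_nil _ hSe] at hz
      rcases eq_or_ne U2 ([] : Wd α) with hU | hU
      · -- S = V2, and U₀ = P is a prefix of U₁
        have hV : V2 ≠ [] := by
          intro h0
          apply hSe
          rw [hS, hU, h0, invRev_empty, List.nil_append]
        rw [hS, hU, invRev_empty, List.nil_append] at hz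
        apply hnd.1
        rcases V2 with _ | ⟨b0, V2t⟩
        · exact absurd rfl hV
        · simp only [List.head?_cons, Option.mem_def, Option.some.injEq] at hz
          have hb0 : b0 = (x₀, false) := by
            subst hz
            ext
            · exact hc1.symm
            · revert hc2; cases hb : b0.2 <;> simp
          refine ⟨V2t, ?_⟩
          rw [hp2, hp1, hU, List.append_nil, hb0]
      · -- U2 nonempty: head of S is ng of last of U₀
        have hinv : invRev U2 ≠ [] := by
          intro h0
          apply hU
          have := congrArg List.length h0
          rw [invRev_length] at this
          exact List.length_eq_zero_iff.1 this
        rw [hS, List.head?_append_of_ne_nil _ hinv, head?_invRev] at hz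
        rcases Option.map_eq_some_iff.1 (Option.mem_def.1 hz) with ⟨a, ha, rfl⟩
        simp only [ng] at hc1 hc2
        have hlast : u₀.toWord.getLast? = some a := by
          rw [hp1, List.getLast?_append_of_ne_nil _ hU]
          exact ha
        apply h₀ true
        rw [hlast]
        have : a = (x₀, true) := by
          ext
          · exact hc1.symm
          · revert hc2; cases a.2 <;> simp
        rw [this]
  refine List.IsChain.append (rd_toWord u₀) hCx ?_
  intro y hy z hz hc
  simp only [List.head?_cons, Option.mem_def, Option.some.injEq] at hz
  subst hz
  rcases hc with ⟨hc1, hc2⟩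
  simp only at hc1 hc2
  apply h₀ false
  rw [Option.mem_def.1 hy]
  have : y = (x₀, false) := by
    ext
    · exact hc1
    · rw [hc2]; rfl
  rw [this]


lemma mk_cons_false (x : α) (V : Wd α) : (mk ((x, false) :: V) : FreeGroup α) = (of x)⁻¹ * mk V := by
  have h1 : (mk [(x, false)] : FreeGroup α) = (of x)⁻¹ := by rw [of, inv_mk]; rfl
  rw [← h1, mul_mk]; rfl

lemma mk_cons_true (x : α) (V : Wd α) : (mk ((x, true) :: V) : FreeGroup α) = of x * mk V := by
  rw [of, mul_mk]; rfl

/-- the `σ` move decreases length when the first word condition fails -/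
lemma stepA1 {u u' : FreeGroup α} {x x' : α} (h' : Can u' x') {V : Wd α}
    (hV : u'.toWord = u.toWord ++ (x, false) :: V) :
    FreeGroup.norm ((u * of x * u⁻¹) * (u' * of x' * u'⁻¹) * (u * of x * u⁻¹)⁻¹) <
      FreeGroup.norm (u' * of x' * u'⁻¹) := by
  set c := u * of x * u⁻¹ with hc
  have hu' : u' = u * ((of x)⁻¹ * mk V) := by
    conv_lhs => rw [← mk_toWord (x := u')]
    rw [hV, ← mul_mk, mk_toWord, mk_cons_false]
  have hcu : c * u' = u * mk V := by
    rw [hc, hu']; group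
  have heq : c * (u' * of x' * u'⁻¹) * c⁻¹ = (c * u') * of x' * (c * u')⁻¹ := by group
  rw [heq, hcu]
  have hb : FreeGroup.norm (u * mk V) ≤ FreeGroup.norm u + V.length :=
    le_trans (norm_mul_le _ _) (Nat.add_le_add_left norm_mk_le _)
  have hlen : u'.toWord.length = u.toWord.length + V.length + 1 := by
    rw [hV]; simp; omega
  have h2 := norm_conj_le (u * mk V) x'
  rw [norm_conj_can h']
  have : FreeGroup.norm u = u.toWord.length := rfl
  have : FreeGroup.norm u' = u'.toWord.length := rfl
  omega

/-- the `σ⁻¹` move decreases length when the second word condition fails -/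
lemma stepA2 {u u' : FreeGroup α} {x x' : α} (h : Can u x) {V : Wd α}
    (hV : u.toWord = u'.toWord ++ (x', true) :: V) :
    FreeGroup.norm ((u' * of x' * u'⁻¹)⁻¹ * (u * of x * u⁻¹) * (u' * of x' * u'⁻¹)) <
      FreeGroup.norm (u * of x * u⁻¹) := by
  set c' := u' * of x' * u'⁻¹ with hc'
  have hu : u = u' * (of x' * mk V) := by
    conv_lhs => rw [← mk_toWord (x := u)]
    rw [hV, ← mul_mk, mk_toWord, mk_cons_true]
  have hcu : c'⁻¹ * u = u' * mk V := by
    rw [hc', hu]; group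
  have heq : c'⁻¹ * (u * of x * u⁻¹) * c' = (c'⁻¹ * u) * of x * (c'⁻¹ * u)⁻¹ := by group
  rw [heq, hcu]
  have hb : FreeGroup.norm (u' * mk V) ≤ FreeGroup.norm u' + V.length :=
    le_trans (norm_mul_le _ _) (Nat.add_le_add_left norm_mk_le _)
  have hlen : u.toWord.length = u'.toWord.length + V.length + 1 := by
    rw [hV]; simp; omega
  have h2 := norm_conj_le (u' * mk V) x
  rw [norm_conj_can h]
  have : FreeGroup.norm u = u.toWord.length := rfl
  have : FreeGroup.norm u' = u'.toWord.length := rfl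
  omega

/-- conjugate of a generator associated to a canonical pair -/
def cnj (p : FreeGroup α × α) : FreeGroup α := p.1 * of p.2 * p.1⁻¹

def AllCan (L : List (FreeGroup α × α)) : Prop := ∀ p ∈ L, Can p.1 p.2
def ChainND (L : List (FreeGroup α × α)) : Prop :=
  L.Chain' (fun p q => NDW p.1 p.2 q.1 q.2)

lemma shape : ∀ (L : List (FreeGroup α × α)) (u : FreeGroup α) (x : α),
    AllCan ((u, x) :: L) → ChainND ((u, x) :: L) →
    ∃ R, ((((u, x) :: L).map cnj).prod).toWord = u.toWord ++ (x, true) :: R := by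
  intro L
  induction L with
  | nil =>
    intro u x hcan _
    refine ⟨invRev u.toWord, ?_⟩
    have h0 : Can u x := hcan (u, x) (List.mem_cons_self)
    simp only [List.map_cons, List.map_nil, List.prod_cons, List.prod_nil, mul_one]
    exact structWord h0
  | cons q L ih =>
    intro u x hcan hnd
    obtain ⟨u₁, x₁⟩ := q
    have hcan' : AllCan ((u₁, x₁) :: L) := fun p hp => hcan p (List.mem_cons_of_mem _ hp)
    have hnd' : ChainND ((u₁, x₁) :: L) := hnd.tail
    rcases ih u₁ x₁ hcan' hnd' with ⟨R, hR⟩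
    have h0 : Can u x := hcan (u, x) (List.mem_cons_self)
    have h1 : Can u₁ x₁ := hcan (u₁, x₁) (List.mem_cons_of_mem _ (List.mem_cons_self))
    have hndw : NDW u x u₁ x₁ := (List.isChain_cons_cons.1 hnd).1
    refine ⟨(u⁻¹ * u₁).toWord ++ (x₁, true) :: R, ?_⟩
    have hprod : (((u, x) :: (u₁, x₁) :: L).map cnj).prod =
        (u * of x * u⁻¹) * ((((u₁, x₁) :: L).map cnj).prod) := by
      simp only [List.map_cons, List.prod_cons, cnj]
    rw [hprod]
    exact step h0 h1 hndw hR

lemma pos_append {L₁ L₂ : Wd α} (h : Pos (L₁ ++ L₂)) : Pos L₁ ∧ Pos L₂ :=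
  ⟨fun p hp => h p (List.mem_append_left _ hp), fun p hp => h p (List.mem_append_right _ hp)⟩

lemma pos_invRev_elim {U : Wd α} (hU : Pos U) (hI : Pos (invRev U)) : U = [] := by
  rcases eq_or_ne U ([] : Wd α) with h | h
  · exact h
  · exfalso
    rcases List.exists_mem_of_ne_nil U h with ⟨a, ha⟩
    have h1 : a.2 = true := hU a ha
    have h2 : ng a ∈ invRev U := by
      rw [invRev_eq, List.mem_reverse]
      exact List.mem_map_of_mem ha
    have h3 := hI (ng a) h2
    rw [ng] at h3
    simp only [h1] at h3
    simp at h3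

lemma allOne : ∀ (L : List (FreeGroup α × α)),
    AllCan L → ChainND L → Pos (((L.map cnj).prod).toWord) → ∀ p ∈ L, p.1 = 1 := by
  intro L
  induction L with
  | nil => intro _ _ _ p hp; simp at hp
  | cons q L ih =>
    intro hcan hnd hpos
    obtain ⟨u, x⟩ := q
    cases L with
    | nil =>
      have h0 : Can u x := hcan (u, x) (List.mem_cons_self)
      have hw : (([(u, x)].map cnj).prod).toWord = u.toWord ++ (x, true) :: invRev u.toWord := by
        simp only [List.map_cons, List.map_nil, List.prod_cons, List.prod_nil, mul_one]
        exact structWord h0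
      rw [hw] at hpos
      have hU : Pos u.toWord := (pos_append hpos).1
      have hIU : Pos (invRev u.toWord) := by
        have := (pos_append hpos).2
        exact fun p hp => this p (List.mem_cons_of_mem _ hp)
      have hUe : u.toWord = [] := pos_invRev_elim hU hIU
      intro p hp
      simp only [List.mem_singleton] at hp
      subst hp
      exact toWord_eq_nil_iff.1 hUe
    | cons q₁ L' =>
      obtain ⟨u₁, x₁⟩ := q₁
      have hcan' : AllCan ((u₁, x₁) :: L') := fun p hp => hcan p (List.mem_cons_of_mem _ hp)
      have hnd' : ChainND ((u₁, x₁) :: L') := hnd.tail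
      have h0 : Can u x := hcan (u, x) (List.mem_cons_self)
      have h1 : Can u₁ x₁ := hcan (u₁, x₁) (List.mem_cons_of_mem _ (List.mem_cons_self))
      have hndw : NDW u x u₁ x₁ := (List.isChain_cons_cons.1 hnd).1
      rcases shape ((u₁, x₁) :: L').tail u₁ x₁ hcan' hnd' with ⟨R, hR⟩
      simp only [List.tail_cons] at hR
      have hprod : ((((u, x) :: (u₁, x₁) :: L').map cnj).prod) =
          (u * of x * u⁻¹) * ((((u₁, x₁) :: L').map cnj).prod) := by
        simp only [List.map_cons, List.prod_cons, cnj]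
      have hword := step h0 h1 hndw hR
      rw [hprod, hword] at hpos
      -- decompose positivity
      have hU : Pos u.toWord := (pos_append hpos).1
      have hrest : Pos ((x, true) :: ((u⁻¹ * u₁).toWord ++ (x₁, true) :: R)) := (pos_append hpos).2
      have hS : Pos ((u⁻¹ * u₁).toWord) :=
        (pos_append (fun p hp => hrest p (List.mem_cons_of_mem _ hp))).1
      have hxR : Pos ((x₁, true) :: R) :=
        (pos_append (fun p hp => hrest p (List.mem_cons_of_mem _ hp))).2
      -- split data
      rcases splitP_spec u.toWord u₁.toWord with ⟨P, hp1, hp2, _⟩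
      have hSsplit := prodSplit u u₁
      -- positivity of tail product word
      have hposZ : Pos ((((u₁, x₁) :: L').map cnj).prod).toWord := by
        rw [hR]
        intro p hp
        rcases List.mem_append.1 hp with hp | hp
        · -- p ∈ u₁.toWord = P ++ V2
          rw [hp2] at hp
          rcases List.mem_append.1 hp with hp | hp
          · exact hU p (by rw [hp1]; exact List.mem_append_left _ hp)
          · apply hS
            rw [hSsplit]
            exact List.mem_append_right _ hp
        · exact hxR p hp
      have htail := ih hcan' hnd' hposZ
      have hu₁ : u₁ = 1 := htail (u₁, x₁) (List.mem_cons_self)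
      -- deduce u = 1
      have hU₁nil : u₁.toWord = [] := by rw [hu₁]; exact toWord_one
      have hPnil : P = [] ∧ (splitP u.toWord u₁.toWord).2 = [] := by
        apply List.append_eq_nil_iff.1
        rw [← hp2, hU₁nil]
      have hUU2 : u.toWord = (splitP u.toWord u₁.toWord).1 := by
        conv_lhs => rw [hp1]
        rw [hPnil.1, List.nil_append]
      have hIU2 : Pos (invRev (splitP u.toWord u₁.toWord).1) := by
        intro p hp
        apply hS
        rw [hSsplit]
        exact List.mem_append_left _ hp
      have hUe : u.toWord = [] := by
        rw [hUU2]
        exact pos_invRev_elim (by rw [← hUU2]; exact hU) hIU2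
      intro p hp
      rcases List.mem_cons.1 hp with hp | hp
      · subst hp; exact toWord_eq_nil_iff.1 hUe
      · exact htail p hp


section Moves

variable {G : Type*} [Group G]

/-- elementary Hurwitz move on lists -/
inductive LS : List G → List G → Prop
  | intro (p s : List G) (a b : G) : LS (p ++ a :: b :: s) (p ++ (a * b * a⁻¹) :: a :: s)

/-- Hurwitz equivalence -/
def LEq : List G → List G → Prop := Relation.EqvGen LS

lemma LS_prod {l l' : List G} (h : LS l l') : l.prod = l'.prod := by
  rcases h with ⟨p, s, a, b⟩
  simp only [List.prod_append, List.prod_cons]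
  group

lemma LS_length {l l' : List G} (h : LS l l') : l.length = l'.length := by
  rcases h with ⟨p, s, a, b⟩
  simp

lemma LEq_prod {l l' : List G} (h : LEq l l') : l.prod = l'.prod := by
  induction h with
  | rel _ _ h => exact LS_prod h
  | refl => rfl
  | symm _ _ _ ih => exact ih.symm
  | trans _ _ _ _ _ ih1 ih2 => exact ih1.trans ih2

lemma LEq_length {l l' : List G} (h : LEq l l') : l.length = l'.length := by
  induction h with
  | rel _ _ h => exact LS_length h
  | refl => rfl
  | symm _ _ _ ih => exact ih.symm
  | trans _ _ _ _ _ ih1 ih2 => exact ih1.trans ih2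

lemma LEq_refl (l : List G) : LEq l l := Relation.EqvGen.refl l
lemma LEq_symm {l l' : List G} (h : LEq l l') : LEq l' l := Relation.EqvGen.symm _ _ h
lemma LEq_trans {l₁ l₂ l₃ : List G} (h1 : LEq l₁ l₂) (h2 : LEq l₂ l₃) : LEq l₁ l₃ :=
  Relation.EqvGen.trans _ _ _ h1 h2

end Moves

lemma chain'_of_adj {β : Type*} {R : β → β → Prop} :
    ∀ (l : List β), (∀ (p : List β) (x y : β) (s : List β), l = p ++ x :: y :: s → R x y) →
      l.Chain' R := by
  intro l
  induction l with
  | nil => intro _; exact List.isChain_nil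
  | cons a t ih =>
    intro h
    cases t with
    | nil => exact List.isChain_singleton a
    | cons b t' =>
      refine List.isChain_cons_cons.2 ⟨h [] a b t' rfl, ih ?_⟩
      intro p x y s hp
      exact h (a :: p) x y s (by rw [hp]; rfl)

def ConjGen (c : FreeGroup α) : Prop := ∃ (w : FreeGroup α) (x : α), c = w * of x * w⁻¹

def letters (W : FreeGroup α) : List (FreeGroup α) := W.toWord.map (fun p => of p.1)

lemma posProd (xs : List α) :
    ((xs.map (of : α → FreeGroup α)).prod).toWord = xs.map (fun x => (x, true)) := by
  have hmk : ((xs.map (of : α → FreeGroup α)).prod) = mk (xs.map (fun x => (x, true))) := by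
    induction xs with
    | nil => rfl
    | cons a t ih =>
      simp only [List.map_cons, List.prod_cons, ih, of, mul_mk]
      rfl
  rw [hmk]
  apply toWord_mk_rd
  apply rd_of_pos
  intro p hp
  rcases List.mem_map.1 hp with ⟨y, _, rfl⟩
  rfl

lemma chooseCanon : ∀ l : List (FreeGroup α), (∀ c ∈ l, ConjGen c) →
    ∃ L : List (FreeGroup α × α), l = L.map cnj ∧ AllCan L := by
  intro l
  induction l with
  | nil => intro _; exact ⟨[], rfl, fun p hp => absurd hp (List.not_mem_nil)⟩
  | cons c t ih =>
    intro h
    rcases h c (List.mem_cons_self) with ⟨w, x, hc⟩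
    rcases canon w x with ⟨u, hu, hcan⟩
    rcases ih (fun d hd => h d (List.mem_cons_of_mem _ hd)) with ⟨L, hL1, hL2⟩
    refine ⟨(u, x) :: L, ?_, ?_⟩
    · simp only [List.map_cons, ← hL1, cnj]
      rw [hc, ← hu]
    · intro p hp
      rcases List.mem_cons.1 hp with hp | hp
      · subst hp; exact hcan
      · exact hL2 p hp

lemma mainList0 : ∀ (N : ℕ) (l : List (FreeGroup α)), (l.map FreeGroup.norm).sum ≤ N →
    (∀ c ∈ l, ConjGen c) → Pos (l.prod.toWord) → LEq l (letters l.prod) := by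
  intro N
  induction N using Nat.strong_induction_on with
  | _ N ihN =>
  intro l hsum hconj hpos
  by_cases H : ∃ (p : List (FreeGroup α)) (a b : FreeGroup α) (s : List (FreeGroup α)),
      l = p ++ a :: b :: s ∧ (FreeGroup.norm (a * b * a⁻¹) < FreeGroup.norm b ∨
        FreeGroup.norm (b⁻¹ * a * b) < FreeGroup.norm a)
  · rcases H with ⟨p, a, b, s, hl, hdec⟩
    have ha_mem : a ∈ l := by
      rw [hl]; exact List.mem_append_right _ (List.mem_cons_self)
    have hb_mem : b ∈ l := by
      rw [hl]
      exact List.mem_append_right _ (List.mem_cons_of_mem _ (List.mem_cons_self))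
    have hasum : (l.map FreeGroup.norm).sum =
        ((p.map FreeGroup.norm).sum + ((s.map FreeGroup.norm).sum +
          (FreeGroup.norm a + FreeGroup.norm b))) := by
      rw [hl]; simp; ring
    rcases hdec with hdec | hdec
    · set l₂ := p ++ (a * b * a⁻¹) :: a :: s with hl₂
      have hls : LS l l₂ := by rw [hl, hl₂]; exact LS.intro p s a b
      have hle : LEq l l₂ := Relation.EqvGen.rel _ _ hls
      have hprod : l₂.prod = l.prod := (LS_prod hls).symm
      have hconj₂ : ∀ c ∈ l₂, ConjGen c := by
        intro c hc
        rw [hl₂] at hc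
        rcases List.mem_append.1 hc with hc | hc
        · exact hconj c (by rw [hl]; exact List.mem_append_left _ hc)
        · rcases List.mem_cons.1 hc with hc | hc
          · subst hc
            rcases hconj b hb_mem with ⟨w, x, hw⟩
            exact ⟨a * w, x, by rw [hw]; group⟩
          · rcases List.mem_cons.1 hc with hc | hc
            · rw [hc]
              exact hconj a ha_mem
            · refine hconj c ?_
              rw [hl]
              exact List.mem_append_right _
                (List.mem_cons_of_mem _ (List.mem_cons_of_mem _ hc))
      have hsum₂ : (l₂.map FreeGroup.norm).sum < (l.map FreeGroup.norm).sum := by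
        rw [hasum, hl₂]
        simp
        omega
      have hpos₂ : Pos (l₂.prod.toWord) := by rw [hprod]; exact hpos
      have hrec := ihN ((l₂.map FreeGroup.norm).sum) (lt_of_lt_of_le hsum₂ hsum) l₂
        (le_refl _) hconj₂ hpos₂
      rw [hprod] at hrec
      exact LEq_trans hle hrec
    · set l₂ := p ++ b :: (b⁻¹ * a * b) :: s with hl₂
      have hls : LS l₂ l := by
        have h0 := LS.intro (G := FreeGroup α) p s b (b⁻¹ * a * b)
        have e : b * (b⁻¹ * a * b) * b⁻¹ = a := by group
        rw [e] at h0
        rw [hl, hl₂]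
        exact h0
      have hle : LEq l l₂ := LEq_symm (Relation.EqvGen.rel _ _ hls)
      have hprod : l₂.prod = l.prod := LS_prod hls
      have hconj₂ : ∀ c ∈ l₂, ConjGen c := by
        intro c hc
        rw [hl₂] at hc
        rcases List.mem_append.1 hc with hc | hc
        · exact hconj c (by rw [hl]; exact List.mem_append_left _ hc)
        · rcases List.mem_cons.1 hc with hc | hc
          · rw [hc]
            exact hconj b hb_mem
          · rcases List.mem_cons.1 hc with hc | hc
            · subst hc
              rcases hconj a ha_mem with ⟨w, x, hw⟩
              exact ⟨b⁻¹ * w, x, by rw [hw]; group⟩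
            · refine hconj c ?_
              rw [hl]
              exact List.mem_append_right _
                (List.mem_cons_of_mem _ (List.mem_cons_of_mem _ hc))
      have hsum₂ : (l₂.map FreeGroup.norm).sum < (l.map FreeGroup.norm).sum := by
        rw [hasum, hl₂]
        simp
        omega
      have hpos₂ : Pos (l₂.prod.toWord) := by rw [hprod]; exact hpos
      have hrec := ihN ((l₂.map FreeGroup.norm).sum) (lt_of_lt_of_le hsum₂ hsum) l₂
        (le_refl _) hconj₂ hpos₂
      rw [hprod] at hrec
      exact LEq_trans hle hrec
  · -- no decreasing move: every entry is a generator
    rcases chooseCanon l hconj with ⟨L, hL, hcanL⟩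
    have hnd : ChainND L := by
      apply chain'_of_adj
      intro p q q' s hdecomp
      obtain ⟨u, x⟩ := q
      obtain ⟨u', x'⟩ := q'
      have hmem'0 : (u', x') ∈ L := by
        rw [hdecomp]
        exact List.mem_append_right _ (List.mem_cons_of_mem _ (List.mem_cons_self))
      have hmem0 : (u, x) ∈ L := by
        rw [hdecomp]
        exact List.mem_append_right _ (List.mem_cons_self)
      have hmem' : Can u' x' := hcanL (u', x') hmem'0
      have hmem : Can u x := hcanL (u, x) hmem0
      have hldecomp : l = (p.map cnj) ++ cnj (u, x) :: cnj (u', x') :: (s.map cnj) := by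
        rw [hL, hdecomp]; simp
      constructor
      · rintro ⟨V, hV⟩
        exact H ⟨p.map cnj, cnj (u, x), cnj (u', x'), s.map cnj, hldecomp,
          Or.inl (stepA1 hmem' hV)⟩
      · rintro ⟨V, hV⟩
        exact H ⟨p.map cnj, cnj (u, x), cnj (u', x'), s.map cnj, hldecomp,
          Or.inr (stepA2 hmem hV)⟩
    have hone : ∀ p ∈ L, p.1 = 1 := by
      apply allOne L hcanL hnd
      rw [← hL]
      exact hpos
    have hlof : l = (L.map Prod.snd).map of := by
      rw [hL, List.map_map]
      apply List.map_congr_left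
      intro p hp
      have h1 := hone p hp
      simp only [cnj, Function.comp, h1]
      group
    have hword : l.prod.toWord = (L.map Prod.snd).map (fun x => (x, true)) := by
      rw [hlof]
      exact posProd _
    have hlet : letters l.prod = l := by
      rw [letters, hword, List.map_map, hlof]
      rfl
    rw [hlet]
    exact LEq_refl l


section FinLists

variable {β : Type*}

lemma ofn_decomp {n : ℕ} (f : Fin (n + 1) → β) (i : Fin n) :
    List.ofFn f = (List.ofFn f).take (i : ℕ) ++
      f i.castSucc :: f i.succ :: (List.ofFn f).drop ((i : ℕ) + 2) := by
  have h1 : (i : ℕ) < (List.ofFn f).length := by simp only [List.length_ofFn]; omega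
  have h2 : (i : ℕ) + 1 < (List.ofFn f).length := by simp only [List.length_ofFn]; omega
  conv_lhs => rw [← List.take_append_drop (i : ℕ) (List.ofFn f)]
  rw [List.drop_eq_getElem_cons h1, List.drop_eq_getElem_cons h2]
  simp only [List.getElem_ofFn]
  rfl

lemma ofn_update2 {n : ℕ} (f : Fin (n + 1) → β) (i : Fin n) (a b : β) :
    List.ofFn (Function.update (Function.update f i.castSucc a) i.succ b) =
      (List.ofFn f).take (i : ℕ) ++ a :: b :: (List.ofFn f).drop ((i : ℕ) + 2) := by
  have hin : (i : ℕ) < n := i.2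
  apply List.ext_getElem
  · simp
    omega
  · intro j h1 h2
    rw [List.getElem_ofFn]
    have hj : j < n + 1 := by simpa using h1
    have hcs : (i.castSucc : ℕ) = (i : ℕ) := rfl
    have hss : (i.succ : ℕ) = (i : ℕ) + 1 := rfl
    have hlen : ((List.ofFn f).take (i : ℕ)).length = (i : ℕ) := by simp; omega
    rcases lt_trichotomy j (i : ℕ) with hlt | heq | hgt
    · have hjt : j < ((List.ofFn f).take (i : ℕ)).length := by omega
      rw [List.getElem_append_left hjt, List.getElem_take, List.getElem_ofFn]
      have hne1 : (⟨j, hj⟩ : Fin (n + 1)) ≠ i.succ := by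
        intro h
        have h' := congrArg Fin.val h
        simp only [Fin.val_mk, hss] at h'
        omega
      have hne2 : (⟨j, hj⟩ : Fin (n + 1)) ≠ i.castSucc := by
        intro h
        have h' := congrArg Fin.val h
        simp only [Fin.val_mk, hcs] at h'
        omega
      rw [Function.update_of_ne hne1, Function.update_of_ne hne2]
    · have hjt : ((List.ofFn f).take (i : ℕ)).length ≤ j := by omega
      rw [List.getElem_append_right hjt]
      simp only [hlen, heq, Nat.sub_self, List.getElem_cons_zero]
      have he : (⟨j, hj⟩ : Fin (n + 1)) = i.castSucc := Fin.ext (by simp only [Fin.val_mk, hcs]; omega)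
      have hne1 : (⟨j, hj⟩ : Fin (n + 1)) ≠ i.succ := by
        intro h
        have h' := congrArg Fin.val h
        simp only [Fin.val_mk, hss] at h'
        omega
      subst heq
      rw [Function.update_of_ne hne1, he, Function.update_self]
    · have hjt : ((List.ofFn f).take (i : ℕ)).length ≤ j := by omega
      rw [List.getElem_append_right hjt]
      rcases Nat.lt_or_ge j ((i : ℕ) + 2) with hj2 | hj2
      · have h3 : j - ((List.ofFn f).take (i : ℕ)).length = 1 := by omega
        simp only [h3, List.getElem_cons_succ, List.getElem_cons_zero]
        have he : (⟨j, hj⟩ : Fin (n + 1)) = i.succ := Fin.ext (by simp only [Fin.val_mk, hss]; omega)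
        rw [he, Function.update_self]
      · have h3 : j - ((List.ofFn f).take (i : ℕ)).length = (j - (i : ℕ) - 2) + 2 := by omega
        simp only [h3, List.getElem_cons_succ]
        rw [List.getElem_drop, List.getElem_ofFn]
        have hne1 : (⟨j, hj⟩ : Fin (n + 1)) ≠ i.succ := by
          intro h
          have h' := congrArg Fin.val h
          simp only [Fin.val_mk, hss] at h'
          omega
        have hne2 : (⟨j, hj⟩ : Fin (n + 1)) ≠ i.castSucc := by
          intro h
          have h' := congrArg Fin.val h
          simp only [Fin.val_mk, hcs] at h'
          omega
        rw [Function.update_of_ne hne1, Function.update_of_ne hne2]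
        congr 1
        exact Fin.ext (by simp; omega)

end FinLists


end HurwitzAux

/-- The braid relators for the braid group on `k + 1` strands. -/
def braidRels (k : ℕ) : Set (FreeGroup (Fin k)) :=
  {w | (∃ i j : Fin k, (i : ℕ) + 2 ≤ (j : ℕ) ∧
          w = FreeGroup.of i * FreeGroup.of j * (FreeGroup.of i)⁻¹ * (FreeGroup.of j)⁻¹) ∨
       (∃ i j : Fin k, (j : ℕ) = (i : ℕ) + 1 ∧
          w = FreeGroup.of i * FreeGroup.of j * FreeGroup.of i *
                (FreeGroup.of j * FreeGroup.of i * FreeGroup.of j)⁻¹)}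

/-- The braid group `B_{k+1}` on `k + 1` strands. -/
abbrev BraidGroup (k : ℕ) := PresentedGroup (braidRels k)

namespace HurwitzAux

variable {k m : ℕ}

lemma realize (A : BraidGroup k →* Equiv.Perm (Fin (k + 1) → FreeGroup (Fin m)))
    (hA : ∀ (i : Fin k) (g : Fin (k + 1) → FreeGroup (Fin m)),
      A (PresentedGroup.of i) g =
        Function.update
          (Function.update g i.castSucc (g i.castSucc * g i.succ * (g i.castSucc)⁻¹))
          i.succ (g i.castSucc)) :
    ∀ (l l' : List (FreeGroup (Fin m))), LEq l l' →
      ∀ f f' : Fin (k + 1) → FreeGroup (Fin m), List.ofFn f = l → List.ofFn f' = l' →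
        ∃ b : BraidGroup k, A b f = f' := by
  intro l l' h
  induction h with
  | rel x y hxy =>
    intro f f' hf hf'
    rcases hxy with ⟨p, s, a, b⟩
    have hplt : p.length < k := by
      have hlf := congrArg List.length hf
      simp only [List.length_ofFn, List.length_append, List.length_cons] at hlf
      omega
    set i : Fin k := ⟨p.length, hplt⟩ with hidef
    have hiv : (i : ℕ) = p.length := rfl
    have htake : (List.ofFn f).take (i : ℕ) = p := by
      rw [hf, hiv]
      exact List.take_left
    have hcombine : p ++ a :: b :: s = (List.ofFn f).take (i : ℕ) ++
        f i.castSucc :: f i.succ :: (List.ofFn f).drop ((i : ℕ) + 2) :=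
      hf.symm.trans (ofn_decomp f i)
    rw [htake] at hcombine
    have htail := List.append_cancel_left hcombine
    have ha : a = f i.castSucc := by injection htail
    have htail2 : b :: s = f i.succ :: (List.ofFn f).drop ((i : ℕ) + 2) := by
      injection htail with _ h2
    have hb : b = f i.succ := by injection htail2
    have hdrop : s = (List.ofFn f).drop ((i : ℕ) + 2) := by injection htail2 with _ h3
    refine ⟨PresentedGroup.of i, ?_⟩
    apply List.ofFn_injective
    rw [hA i f, ofn_update2, hf', htake, ← ha, ← hb, ← hdrop]
  | refl x =>
    intro f f' hf hf'
    refine ⟨1, ?_⟩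
    have hff : f = f' := List.ofFn_injective (hf.trans hf'.symm)
    rw [map_one, hff]
    rfl
  | symm x y hxy ih =>
    intro f f' hf hf'
    rcases ih f' f hf' hf with ⟨b, hb⟩
    refine ⟨b⁻¹, ?_⟩
    rw [map_inv, ← hb]
    simp
  | trans x y z hxy hyz ih1 ih2 =>
    intro f f' hf hf'
    have hylen : y.length = k + 1 := by
      rw [← LEq_length hxy, ← hf]
      simp
    set fm : Fin (k + 1) → FreeGroup (Fin m) := fun j => y.get (Fin.cast hylen.symm j) with hfmdef
    have hofn : List.ofFn fm = y := by
      apply List.ext_getElem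
      · simp [hylen]
      · intro j h1 h2
        rw [List.getElem_ofFn]
        rfl
    rcases ih1 f fm hf hofn with ⟨b1, h1⟩
    rcases ih2 fm f' hofn hf' with ⟨b2, h2⟩
    refine ⟨b2 * b1, ?_⟩
    rw [map_mul]
    rw [Equiv.Perm.mul_apply, h1, h2]

end HurwitzAux


/-- Under the Hurwitz action of `B_n` (here `n = k + 1`) on `n`-tuples of elements of the free
group `F_m`, the orbit of a tuple `t` whose entries are free generators is exactly the set of
tuples `g` lying in `⋃_{τ ∈ S_n} C(t_{τ(1)}) × ⋯ × C(t_{τ(n)})` whose (ordered) product equals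
the product of `t`, where `C(x)` denotes the conjugacy class. -/
theorem stmt_4 (k m : ℕ)
    (A : BraidGroup k →* Equiv.Perm (Fin (k + 1) → FreeGroup (Fin m)))
    (hA : ∀ (i : Fin k) (g : Fin (k + 1) → FreeGroup (Fin m)),
      A (PresentedGroup.of i) g =
        Function.update
          (Function.update g i.castSucc (g i.castSucc * g i.succ * (g i.castSucc)⁻¹))
          i.succ (g i.castSucc))
    (t : Fin (k + 1) → FreeGroup (Fin m))
    (ht : ∀ i, ∃ j, t i = FreeGroup.of j) :
    ∀ g : Fin (k + 1) → FreeGroup (Fin m),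
      (∃ b : BraidGroup k, A b t = g) ↔
        ((∃ τ : Equiv.Perm (Fin (k + 1)), ∀ i, IsConj (t (τ i)) (g i)) ∧
          (List.ofFn g).prod = (List.ofFn t).prod) := by
  classical
  intro g
  open HurwitzAux in
  have hcs_ne : ∀ i : Fin k, i.castSucc ≠ i.succ := fun i => (Fin.castSucc_lt_succ (i := i)).ne
  constructor
  · rintro ⟨b, hb⟩
    set S : Set (Fin (k + 1) → FreeGroup (Fin m)) :=
      {f | (∃ τ : Equiv.Perm (Fin (k + 1)), ∀ i, IsConj (t (τ i)) (f i)) ∧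
        (List.ofFn f).prod = (List.ofFn t).prod} with hSdef
    have htS : t ∈ S := ⟨⟨1, fun i => IsConj.refl _⟩, rfl⟩
    have hprodmove : ∀ (T D : List (FreeGroup (Fin m))) (a c : FreeGroup (Fin m)),
        (T ++ (a * c * a⁻¹) :: a :: D).prod = (T ++ a :: c :: D).prod := by
      intro T D a c
      simp only [List.prod_append, List.prod_cons]
      group
    have hprodmove' : ∀ (T D : List (FreeGroup (Fin m))) (a c : FreeGroup (Fin m)),
        (T ++ c :: (c⁻¹ * a * c) :: D).prod = (T ++ a :: c :: D).prod := by
      intro T D a c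
      simp only [List.prod_append, List.prod_cons]
      group
    have hmove : ∀ (i : Fin k), ∀ f ∈ S,
        Function.update (Function.update f i.castSucc
          (f i.castSucc * f i.succ * (f i.castSucc)⁻¹)) i.succ (f i.castSucc) ∈ S := by
      intro i f hf
      rcases hf with ⟨⟨τ0, hτ0⟩, hp0⟩
      constructor
      · refine ⟨τ0 * Equiv.swap i.castSucc i.succ, ?_⟩
        intro j
        rcases eq_or_ne j i.castSucc with hj | hj
        · subst hj
          rw [Function.update_of_ne (hcs_ne i), Function.update_self]
          have hτ : (τ0 * Equiv.swap i.castSucc i.succ) i.castSucc = τ0 i.succ := by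
            rw [Equiv.Perm.mul_apply, Equiv.swap_apply_left]
          rw [hτ]
          exact (hτ0 i.succ).trans (isConj_iff.2 ⟨f i.castSucc, rfl⟩)
        · rcases eq_or_ne j i.succ with hj2 | hj2
          · subst hj2
            rw [Function.update_self]
            have hτ : (τ0 * Equiv.swap i.castSucc i.succ) i.succ = τ0 i.castSucc := by
              rw [Equiv.Perm.mul_apply, Equiv.swap_apply_right]
            rw [hτ]
            exact hτ0 i.castSucc
          · rw [Function.update_of_ne hj2, Function.update_of_ne hj]
            have hτ : (τ0 * Equiv.swap i.castSucc i.succ) j = τ0 j := by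
              rw [Equiv.Perm.mul_apply, Equiv.swap_apply_of_ne_of_ne hj hj2]
            rw [hτ]
            exact hτ0 j
      · rw [ofn_update2, hprodmove, ← ofn_decomp]
        exact hp0
    have hmove' : ∀ (i : Fin k), ∀ f ∈ S,
        Function.update (Function.update f i.castSucc (f i.succ)) i.succ
          ((f i.succ)⁻¹ * f i.castSucc * f i.succ) ∈ S := by
      intro i f hf
      rcases hf with ⟨⟨τ0, hτ0⟩, hp0⟩
      constructor
      · refine ⟨τ0 * Equiv.swap i.castSucc i.succ, ?_⟩
        intro j
        rcases eq_or_ne j i.castSucc with hj | hj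
        · subst hj
          rw [Function.update_of_ne (hcs_ne i), Function.update_self]
          have hτ : (τ0 * Equiv.swap i.castSucc i.succ) i.castSucc = τ0 i.succ := by
            rw [Equiv.Perm.mul_apply, Equiv.swap_apply_left]
          rw [hτ]
          exact hτ0 i.succ
        · rcases eq_or_ne j i.succ with hj2 | hj2
          · subst hj2
            rw [Function.update_self]
            have hτ : (τ0 * Equiv.swap i.castSucc i.succ) i.succ = τ0 i.castSucc := by
              rw [Equiv.Perm.mul_apply, Equiv.swap_apply_right]
            rw [hτ]
            exact (hτ0 i.castSucc).trans (isConj_iff.2 ⟨(f i.succ)⁻¹, by group⟩)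
          · rw [Function.update_of_ne hj2, Function.update_of_ne hj]
            have hτ : (τ0 * Equiv.swap i.castSucc i.succ) j = τ0 j := by
              rw [Equiv.Perm.mul_apply, Equiv.swap_apply_of_ne_of_ne hj hj2]
            rw [hτ]
            exact hτ0 j
      · rw [ofn_update2, hprodmove', ← ofn_decomp]
        exact hp0
    have hgen : ∀ (i : Fin k), ∀ f ∈ S,
        A (PresentedGroup.of i) f ∈ S ∧ A (PresentedGroup.of i)⁻¹ f ∈ S := by
      intro i f hf
      constructor
      · rw [hA i f]
        exact hmove i f hf
      · set f'' := Function.update (Function.update f i.castSucc (f i.succ)) i.succ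
          ((f i.succ)⁻¹ * f i.castSucc * f i.succ) with hf''def
      -- A (of i) f'' = f
        have hf''c : f'' i.castSucc = f i.succ := by
          rw [hf''def, Function.update_of_ne (hcs_ne i), Function.update_self]
        have hf''s : f'' i.succ = (f i.succ)⁻¹ * f i.castSucc * f i.succ := by
          rw [hf''def, Function.update_self]
        have hinv : A (PresentedGroup.of i) f'' = f := by
          rw [hA i f'']
          funext j
          rcases eq_or_ne j i.castSucc with hj | hj
          · subst hj
            rw [Function.update_of_ne (hcs_ne i), Function.update_self, hf''c, hf''s]
            group
          · rcases eq_or_ne j i.succ with hj2 | hj2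
            · subst hj2
              rw [Function.update_self, hf''c]
            · rw [Function.update_of_ne hj2, Function.update_of_ne hj, hf''def,
                Function.update_of_ne hj2, Function.update_of_ne hj]
        have : A (PresentedGroup.of i)⁻¹ f = f'' := by
          rw [map_inv, ← hinv]
          simp
        rw [this]
        exact hmove' i f hf
    have hmem : ∀ b : BraidGroup k, ∀ f ∈ S, A b f ∈ S ∧ A b⁻¹ f ∈ S := by
      intro b
      have hb' : b ∈ Subgroup.closure (Set.range (PresentedGroup.of :
          Fin k → BraidGroup k)) := by
        rw [PresentedGroup.closure_range_of]
        trivial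
      refine Subgroup.closure_induction ?_ ?_ ?_ ?_ hb'
      · rintro x ⟨i, rfl⟩ f hf
        exact hgen i f hf
      · intro f hf
        constructor
        · rw [map_one]; simpa using hf
        · rw [inv_one, map_one]; simpa using hf
      · intro x y _ _ ihx ihy f hf
        constructor
        · rw [map_mul, Equiv.Perm.mul_apply]
          exact (ihx _ (ihy f hf).1).1
        · rw [mul_inv_rev, map_mul, Equiv.Perm.mul_apply]
          exact (ihy _ (ihx f hf).2).2
      · intro x _ ihx f hf
        constructor
        · exact (ihx f hf).2
        · rw [inv_inv]
          exact (ihx f hf).1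
    have hfin := (hmem b t htS).1
    rw [hb] at hfin
    exact hfin
  · rintro ⟨⟨τ, hτ⟩, hprod⟩
    have hconjt : ∀ c ∈ List.ofFn t, ConjGen c := by
      intro c hc
      rw [List.mem_ofFn] at hc
      rcases hc with ⟨i, rfl⟩
      rcases ht i with ⟨j, hj⟩
      exact ⟨1, j, by rw [hj]; group⟩
    have hconjg : ∀ c ∈ List.ofFn g, ConjGen c := by
      intro c hc
      rw [List.mem_ofFn] at hc
      rcases hc with ⟨i, rfl⟩
      rcases ht (τ i) with ⟨j, hj⟩
      rcases isConj_iff.1 (hτ i) with ⟨z, hz⟩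
      exact ⟨z, j, by rw [← hz, hj]⟩
    choose xs hxs using ht
    have hoft : List.ofFn t = (List.ofFn xs).map FreeGroup.of := by
      rw [List.map_ofFn]
      congr 1
      funext i
      exact hxs i
    have hpost : Pos ((List.ofFn t).prod).toWord := by
      rw [hoft, posProd]
      intro p hp
      rcases List.mem_map.1 hp with ⟨y, _, rfl⟩
      rfl
    have hposg : Pos ((List.ofFn g).prod).toWord := by
      rw [hprod]
      exact hpost
    have h1 := mainList0 ((List.ofFn t).map FreeGroup.norm).sum (List.ofFn t)
      (le_refl _) hconjt hpost
    have h2 := mainList0 ((List.ofFn g).map FreeGroup.norm).sum (List.ofFn g)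
      (le_refl _) hconjg hposg
    rw [hprod] at h2
    have hle : LEq (List.ofFn t) (List.ofFn g) := LEq_trans h1 (LEq_symm h2)
    exact realize A hA _ _ hle t g rfl rfl
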